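/- Then for all 0 ≤ j, k ≤ n−1 the integral ∫₀^∞ P_j(x) Q_k(x) dx converges absolutely and equals δ_{j,k} (1 if j = k and 0 otherwise). -/

import Mathlib

open MeasureTheory Set Filter

lemma myGamma (k : ℕ) :
    IntegrableOn (fun t : ℝ => t ^ k * Real.exp (-t)) (Ioi 0) ∧
    ∫ t in Ioi (0:ℝ), t ^ k * Real.exp (-t) = (Nat.factorial k : ℝ) := by
  have h0 : (0:ℝ) < (k : ℝ) + 1 := by positivity
  have hconv := Real.GammaIntegral_convergent h0
  have heq : EqOn (fun x : ℝ => Real.exp (-x) * x ^ ((k:ℝ) + 1 - 1))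
      (fun t : ℝ => t ^ k * Real.exp (-t)) (Ioi 0) := by
    intro x hx
    simp only
    rw [add_sub_cancel_right, Real.rpow_natCast, mul_comm]
  constructor
  · exact (integrableOn_congr_fun heq measurableSet_Ioi).1 hconv
  · rw [← setIntegral_congr_fun measurableSet_Ioi heq, ← Real.Gamma_eq_integral h0,
      Real.Gamma_nat_eq_factorial]

lemma mySlice (m : ℕ) {f : ℝ → ℝ} (hfi : IntegrableOn (fun u : ℝ => u ^ m * f u) (Ioi 0))
    {t : ℝ} (ht : 0 < t) :
    IntegrableOn (fun x : ℝ => x ^ m * f (x / t)) (Ioi 0) ∧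
    ∫ x in Ioi (0:ℝ), x ^ m * f (x / t) = t ^ (m + 1) * ∫ u in Ioi (0:ℝ), u ^ m * f u := by
  set g : ℝ → ℝ := fun u => (t * u) ^ m * f u with hg
  have hco : ∀ x : ℝ, g (t⁻¹ * x) = x ^ m * f (x / t) := by
    intro x
    have h1 : t * (t⁻¹ * x) = x := by field_simp
    simp only [hg, h1, div_eq_inv_mul]
  have hgint : IntegrableOn g (Ioi 0) := by
    have h2 := hfi.const_mul (t ^ m)
    exact h2.congr (Eventually.of_forall fun u => by simp only [hg, mul_pow]; ring)
  have hiff := MeasureTheory.integrableOn_Ioi_comp_mul_left_iff g 0 (inv_pos.2 ht)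
  rw [mul_zero] at hiff
  have hint2 : IntegrableOn (fun x => g (t⁻¹ * x)) (Ioi 0) := hiff.2 hgint
  constructor
  · exact hint2.congr (Eventually.of_forall hco)
  · have hval := MeasureTheory.integral_comp_mul_left_Ioi g 0 (inv_pos.2 ht)
    rw [mul_zero] at hval
    have h1 : ∫ x in Ioi (0:ℝ), x ^ m * f (x / t) = ∫ x in Ioi (0:ℝ), g (t⁻¹ * x) :=
      setIntegral_congr_fun measurableSet_Ioi fun x _ => (hco x).symm
    have h2 : ∫ x in Ioi (0:ℝ), g x = t ^ m * ∫ u in Ioi (0:ℝ), u ^ m * f u := by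
      rw [← integral_const_mul]
      exact setIntegral_congr_fun measurableSet_Ioi fun u _ => by
        simp only [hg, mul_pow]; ring
    rw [h1, hval, h2, inv_inv, smul_eq_mul]
    ring

lemma myKey (ν m : ℕ) {f : ℝ → ℝ} (hf : Measurable f)
    (hint : IntegrableOn (fun x : ℝ => x ^ m * |f x|) (Ioi 0)) :
    IntegrableOn
      (fun x : ℝ => x ^ m * ∫ t in Ioi (0:ℝ), t ^ ν * Real.exp (-t) * f (x / t) / t) (Ioi 0) ∧
    (∫ x in Ioi (0:ℝ), x ^ m * ∫ t in Ioi (0:ℝ), t ^ ν * Real.exp (-t) * f (x / t) / t)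
      = (Nat.factorial (m + ν) : ℝ) * ∫ x in Ioi (0:ℝ), x ^ m * f x := by
  set μ := volume.restrict (Ioi (0:ℝ)) with hμ
  have hfi : IntegrableOn (fun u : ℝ => u ^ m * f u) (Ioi 0) := by
    refine hint.mono' ((measurable_id.pow_const m).mul hf).aestronglyMeasurable ?_
    filter_upwards [ae_restrict_mem measurableSet_Ioi] with x hx
    have hx' : (0:ℝ) < x := hx
    simp [Real.norm_eq_abs, abs_mul, abs_pow, abs_of_nonneg hx'.le]
  set G : ℝ × ℝ → ℝ := fun pr => pr.2 ^ m * (pr.1 ^ ν * Real.exp (-pr.1) * f (pr.2 / pr.1) / pr.1)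
    with hGdef
  have hGmeas : Measurable G := by
    apply (measurable_snd.pow_const m).mul
    exact (((measurable_fst.pow_const ν).mul (Real.measurable_exp.comp measurable_fst.neg)).mul
      (hf.comp (measurable_snd.div measurable_fst))).div measurable_fst
  set C : ℝ := ∫ u in Ioi (0:ℝ), u ^ m * |f u| with hC
  have habs : IntegrableOn (fun u : ℝ => u ^ m * |f u|) (Ioi 0) := hint
  have hG : Integrable G (μ.prod μ) := by
    refine (integrable_prod_iff hGmeas.aestronglyMeasurable).2 ⟨?_, ?_⟩
    · filter_upwards [ae_restrict_mem measurableSet_Ioi] with t ht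
      have ht' : (0:ℝ) < t := ht
      have h2 := (mySlice m hfi ht').1.const_mul (t ^ ν * Real.exp (-t) / t)
      exact h2.congr (Eventually.of_forall fun x => by simp only [hGdef]; ring)
    · have hgam : IntegrableOn (fun t : ℝ => t ^ (m + ν) * Real.exp (-t) * C) (Ioi 0) :=
        (myGamma (m + ν)).1.mul_const C
      refine hgam.congr ?_
      filter_upwards [ae_restrict_mem measurableSet_Ioi] with t ht
      have ht' : (0:ℝ) < t := ht
      have hslice := mySlice m habs ht'
      have h1 : ∫ x, ‖G (t, x)‖ ∂μ
          = ∫ x in Ioi (0:ℝ), (t ^ ν * Real.exp (-t) / t) * (x ^ m * |f (x / t)|) := by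
        refine setIntegral_congr_fun measurableSet_Ioi fun x hx => ?_
        have hx' : (0:ℝ) < x := hx
        simp only [hGdef, Real.norm_eq_abs, abs_mul, abs_div, abs_pow,
          abs_of_pos hx', abs_of_pos ht', abs_of_nonneg (Real.exp_pos (-t)).le]
        ring
      rw [h1, integral_const_mul, hslice.2, ← hC, pow_add]
      field_simp
      ring
  have hmargeq : ∀ x : ℝ, ∫ t, G (t, x) ∂μ
      = x ^ m * ∫ t in Ioi (0:ℝ), t ^ ν * Real.exp (-t) * f (x / t) / t := by
    intro x
    exact integral_const_mul (x ^ m) (fun t => t ^ ν * Real.exp (-t) * f (x / t) / t)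
  constructor
  · have hmarg : Integrable (fun x => ∫ t, G (t, x) ∂μ) μ := by
      have := hG.swap.integral_prod_left
      exact this.congr (Eventually.of_forall fun x => by rfl)
    exact hmarg.congr (Eventually.of_forall hmargeq)
  · have hswap := integral_integral_swap (f := fun t x => G (t, x)) hG
    set D : ℝ := ∫ u in Ioi (0:ℝ), u ^ m * f u with hD
    have inner : ∀ t ∈ Ioi (0:ℝ), ∫ x, G (t, x) ∂μ = t ^ (m + ν) * Real.exp (-t) * D := by
      intro t ht
      have ht' : (0:ℝ) < t := ht
      have h1 : ∫ x, G (t, x) ∂μ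
          = ∫ x in Ioi (0:ℝ), (t ^ ν * Real.exp (-t) / t) * (x ^ m * f (x / t)) :=
        setIntegral_congr_fun measurableSet_Ioi fun x _ => by simp only [hGdef]; ring
      rw [h1, integral_const_mul, (mySlice m hfi ht').2, ← hD, pow_add]
      field_simp
      ring
    calc ∫ x in Ioi (0:ℝ), x ^ m * ∫ t in Ioi (0:ℝ), t ^ ν * Real.exp (-t) * f (x / t) / t
        = ∫ x, ∫ t, G (t, x) ∂μ ∂μ :=
          integral_congr_ae (Eventually.of_forall fun x => (hmargeq x).symm)
      _ = ∫ t, ∫ x, G (t, x) ∂μ ∂μ := hswap.symm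
      _ = ∫ t in Ioi (0:ℝ), t ^ (m + ν) * Real.exp (-t) * D :=
          setIntegral_congr_fun measurableSet_Ioi inner
      _ = (∫ t in Ioi (0:ℝ), t ^ (m + ν) * Real.exp (-t)) * D := by
          rw [← integral_mul_const]
      _ = (Nat.factorial (m + ν) : ℝ) * D := by rw [(myGamma (m + ν)).2]



/-- Biorthogonality of the transformed system `(P_k, Q_k)` arising from
multiplication by a complex Ginibre matrix with parameter `ν`:
`P_k(x) = Σ_j a_{j,k}/(j+ν)! x^j` and `Q_k` is the Mellin convolution of `q_k`
with the Gamma density `t^ν e^{-t}`. -/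
theorem stmt7
    (n : ℕ) (hn : 1 ≤ n) (ν : ℕ)
    (a : ℕ → ℕ → ℝ) (ha : ∀ k < n, a k k ≠ 0)
    (p : ℕ → ℝ → ℝ)
    (hp : ∀ k < n, ∀ x : ℝ, p k x = ∑ j ∈ Finset.range (k + 1), a j k * x ^ j)
    (q : ℕ → ℝ → ℝ) (hqmeas : ∀ k < n, Measurable (q k))
    (hqint : ∀ k < n, ∀ j < n, IntegrableOn (fun x => x ^ j * |q k x|) (Ioi 0))
    (hbiorth : ∀ j < n, ∀ k < n,
      ∫ x in Ioi (0:ℝ), p j x * q k x = if j = k then 1 else 0)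
    (P : ℕ → ℝ → ℝ)
    (hP : ∀ k < n, ∀ x : ℝ, P k x =
      ∑ j ∈ Finset.range (k + 1), a j k / (Nat.factorial (j + ν) : ℝ) * x ^ j)
    (Q : ℕ → ℝ → ℝ)
    (hQ : ∀ k < n, ∀ y ∈ Ioi (0:ℝ),
      Q k y = ∫ t in Ioi (0:ℝ), t ^ ν * Real.exp (-t) * q k (y / t) / t) :
    ∀ j < n, ∀ k < n,
      IntegrableOn (fun x => P j x * Q k x) (Ioi 0) ∧
      ∫ x in Ioi (0:ℝ), P j x * Q k x = if j = k then 1 else 0 := by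
  intro j hj k hk
  -- integrability of plain monomial times q k
  have hqik : ∀ i < n, IntegrableOn (fun x : ℝ => x ^ i * q k x) (Ioi 0) := by
    intro i hi
    refine (hqint k hk i hi).mono'
      ((measurable_id.pow_const i).mul (hqmeas k hk)).aestronglyMeasurable ?_
    filter_upwards [ae_restrict_mem measurableSet_Ioi] with x hx
    have hx' : (0:ℝ) < x := hx
    simp [Real.norm_eq_abs, abs_mul, abs_pow, abs_of_nonneg hx'.le]
  -- per-monomial facts for Q
  have mono : ∀ i < n, IntegrableOn (fun x : ℝ => x ^ i * Q k x) (Ioi 0) ∧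
      ∫ x in Ioi (0:ℝ), x ^ i * Q k x
        = (Nat.factorial (i + ν) : ℝ) * ∫ x in Ioi (0:ℝ), x ^ i * q k x := by
    intro i hi
    obtain ⟨hint', hval⟩ := myKey ν i (hqmeas k hk) (hqint k hk i hi)
    have heq : EqOn
        (fun x : ℝ => x ^ i * ∫ t in Ioi (0:ℝ), t ^ ν * Real.exp (-t) * q k (x / t) / t)
        (fun x : ℝ => x ^ i * Q k x) (Ioi 0) := fun x hx => by
      simp only [hQ k hk x hx]
    exact ⟨(integrableOn_congr_fun heq measurableSet_Ioi).1 hint',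
      by rw [← setIntegral_congr_fun measurableSet_Ioi heq, hval]⟩
  have hlt : ∀ i ∈ Finset.range (j + 1), i < n := fun i hi =>
    lt_of_le_of_lt (Nat.lt_succ_iff.1 (Finset.mem_range.1 hi)) hj
  have hPeq : ∀ x : ℝ, P j x * Q k x
      = ∑ i ∈ Finset.range (j + 1),
          a i j / (Nat.factorial (i + ν) : ℝ) * (x ^ i * Q k x) := by
    intro x
    rw [hP j hj x, Finset.sum_mul]
    exact Finset.sum_congr rfl fun i _ => by ring
  have hterm : ∀ i ∈ Finset.range (j + 1),
      IntegrableOn (fun x : ℝ => a i j / (Nat.factorial (i + ν) : ℝ) * (x ^ i * Q k x))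
        (Ioi 0) := fun i hi => (mono i (hlt i hi)).1.const_mul _
  constructor
  · have hsum : IntegrableOn (fun x : ℝ => ∑ i ∈ Finset.range (j + 1),
        a i j / (Nat.factorial (i + ν) : ℝ) * (x ^ i * Q k x)) (Ioi 0) :=
      integrable_finset_sum _ hterm
    exact hsum.congr (Eventually.of_forall fun x => (hPeq x).symm)
  · have hbio := hbiorth j hj k hk
    have hL : ∫ x in Ioi (0:ℝ), P j x * Q k x
        = ∑ i ∈ Finset.range (j + 1), a i j * ∫ x in Ioi (0:ℝ), x ^ i * q k x := by
      rw [setIntegral_congr_fun measurableSet_Ioi fun x _ => hPeq x,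
        integral_finset_sum _ hterm]
      refine Finset.sum_congr rfl fun i hi => ?_
      rw [integral_const_mul, (mono i (hlt i hi)).2]
      have hc : (Nat.factorial (i + ν) : ℝ) ≠ 0 :=
        Nat.cast_ne_zero.2 (Nat.factorial_ne_zero _)
      field_simp
    have hR : ∫ x in Ioi (0:ℝ), p j x * q k x
        = ∑ i ∈ Finset.range (j + 1), a i j * ∫ x in Ioi (0:ℝ), x ^ i * q k x := by
      have heq2 : EqOn (fun x : ℝ => p j x * q k x)
          (fun x : ℝ => ∑ i ∈ Finset.range (j + 1), a i j * (x ^ i * q k x)) (Ioi 0) := by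
        intro x _
        simp only [hp j hj x, Finset.sum_mul]
        exact Finset.sum_congr rfl fun i _ => by ring
      rw [setIntegral_congr_fun measurableSet_Ioi heq2,
        integral_finset_sum _ fun i hi => (hqik i (hlt i hi)).const_mul _]
      exact Finset.sum_congr rfl fun i _ => integral_const_mul _ _
    rw [hL, ← hR, hbio]
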